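/- For every odd positive integer k, ∑_{n=0}^{k-1} exp(i π (n² - n) / k) = ((1 + i)/2) * exp(-i π / (4k)) * √(2k), where the sum is taken in the complex numbers. -/

import Mathlib

open Finset Real Complex Filter Topology

lemma summable_quad {a : ℂ} (ha : 0 < a.re) : Summable fun n : ℤ => cexp (-π * a * n ^ 2) := by
  have := (summable_jacobiTheta₂_term_iff 0 (I * a)).mpr (by simpa using ha)
  apply this.congr
  intro n
  simp only [jacobiTheta₂_term, mul_zero, zero_add]
  congr 1
  ring_nf
  rw [I_sq]
  ring

lemma summable_rexp_quad {t : ℝ} (ht : 0 < t) : Summable fun n : ℤ => rexp (-π * t * n ^ 2) := by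
  rw [← Complex.summable_ofReal]
  have := summable_quad (a := (t : ℂ)) (by simpa using ht)
  apply this.congr
  intro n
  rw [Complex.ofReal_exp]
  norm_num

lemma theta_limit (c : ℤ → ℂ) (hc : ∀ n, ‖c n‖ ≤ 1) :
    Tendsto (fun t : ℝ => ∑' n : ℤ, c n * cexp (-π * t * n ^ 2)) atTop (𝓝 (c 0)) := by
  have key : Tendsto (fun t : ℝ => ∑' n : ℤ, c n * cexp (-π * t * n ^ 2)) atTop
      (𝓝 (∑' n : ℤ, if n = 0 then c 0 else 0)) := by
    apply tendsto_tsum_of_dominated_convergence (bound := fun n : ℤ => rexp (-π * 1 * n ^ 2))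
    · exact summable_rexp_quad one_pos
    · intro n
      by_cases h : n = 0
      · simp [h]
      · simp only [h, if_false]
        rw [show (fun t : ℝ => c n * cexp (-π * t * n ^ 2)) = fun t : ℝ =>
          c n * ((rexp (-π * n ^ 2 * t) : ℝ) : ℂ) by
            funext t; rw [Complex.ofReal_exp]; push_cast; ring_nf]
        rw [show (0 : ℂ) = c n * ((0:ℝ):ℂ) by simp]
        apply Tendsto.mul tendsto_const_nhds
        apply Tendsto.comp Complex.continuous_ofReal.continuousAt.tendsto
        apply Real.tendsto_exp_atBot.comp
        apply Tendsto.const_mul_atTop_of_neg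
        · have : (0:ℝ) < (n:ℝ)^2 := by positivity
          nlinarith [Real.pi_pos]
        · exact tendsto_id
    · filter_upwards [eventually_ge_atTop (1:ℝ)] with t ht n
      rw [norm_mul]
      calc ‖c n‖ * ‖cexp (-π * t * n ^ 2)‖ ≤ 1 * ‖cexp (-π * t * n ^ 2)‖ := by
            gcongr; exact hc n
        _ = rexp (-π * t * n ^ 2) := by
            rw [one_mul, show (-(π:ℂ) * (t:ℂ) * (n:ℂ)^2) = ((-π*t*(n:ℝ)^2 : ℝ):ℂ) by push_cast; ring,
              Complex.norm_exp, Complex.ofReal_re]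
        _ ≤ rexp (-π * 1 * n ^ 2) := by
            apply Real.exp_le_exp.mpr
            nlinarith [mul_nonneg (mul_nonneg (sub_nonneg.mpr ht) Real.pi_pos.le) (sq_nonneg (n:ℝ))]
  simpa [tsum_ite_eq] using key

lemma sq_of_cpow_half (z : ℂ) (hz : z ≠ 0) : (z ^ (1/2 : ℂ)) ^ 2 = z := by
  rw [sq, ← Complex.cpow_add _ _ hz]
  norm_num

lemma re_pos_mul_cpow_half {x y : ℂ} (hx : 0 < x.re) (hy : 0 < y.re) :
    0 < (x ^ (1/2 : ℂ) * y ^ (1/2 : ℂ)).re := by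
  have hx0 : x ≠ 0 := fun h => by rw [h] at hx; simp at hx
  have hy0 : y ≠ 0 := fun h => by rw [h] at hy; simp at hy
  have hax : |Complex.arg x| < π/2 := Complex.abs_arg_lt_pi_div_two_iff.mpr (Or.inl hx)
  have hay : |Complex.arg y| < π/2 := Complex.abs_arg_lt_pi_div_two_iff.mpr (Or.inl hy)
  rw [Complex.cpow_def_of_ne_zero hx0, Complex.cpow_def_of_ne_zero hy0, ← Complex.exp_add,
    Complex.exp_re]
  apply mul_pos (Real.exp_pos _)
  apply Real.cos_pos_of_mem_Ioo
  have him : (Complex.log x * (1/2) + Complex.log y * (1/2)).im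
      = Complex.arg x / 2 + Complex.arg y / 2 := by
    simp [Complex.mul_im, Complex.add_im, Complex.log_im]
    ring
  rw [Set.mem_Ioo, him, abs_lt] at *
  constructor <;> [nlinarith [hax.1, hax.2, hay.1, hay.2]; nlinarith [hax.1, hax.2, hay.1, hay.2]]

lemma eq_of_sq_eq_sq_re_pos {u v : ℂ} (h : u ^ 2 = v ^ 2) (hu : 0 < u.re) (hv : 0 < v.re) :
    u = v := by
  have : (u - v) * (u + v) = 0 := by ring_nf; linear_combination h
  rcases mul_eq_zero.mp this with h1 | h1
  · exact sub_eq_zero.mp h1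
  · exfalso
    have : u = -v := by linear_combination h1
    rw [this] at hu
    simp only [Complex.neg_re] at hu
    linarith

lemma cpow_half_mul_eq {x y v : ℂ} (hx : 0 < x.re) (hy : 0 < y.re) (hv : 0 < v.re)
    (hsq : x * y = v ^ 2) : x ^ (1/2 : ℂ) * y ^ (1/2 : ℂ) = v := by
  apply eq_of_sq_eq_sq_re_pos _ (re_pos_mul_cpow_half hx hy) hv
  have hx0 : x ≠ 0 := fun h => by rw [h] at hx; simp at hx
  have hy0 : y ≠ 0 := fun h => by rw [h] at hy; simp at hy
  rw [mul_pow, sq_of_cpow_half x hx0, sq_of_cpow_half y hy0, hsq]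


lemma key_identity (N : ℕ) (M : ℕ) (hM : N = 4 * M) (hMpos : 0 < M) (ε : ℝ) (hε : 0 < ε) :
    (Real.sqrt ε : ℂ) * ∑' n : ℤ, cexp (-π * ((ε:ℂ) - ((2/(N:ℝ) : ℝ):ℂ)*I) * n^2)
      = (1+I)/(Real.sqrt N : ℂ) *
        ∑' n : ℤ, cexp (-π * (((4/((N:ℝ)^2*ε) : ℝ) : ℂ) + ((2/(N:ℝ) : ℝ):ℂ)*I) * n^2) := by
  have hN : 0 < N := by omega
  have hNR : (0:ℝ) < N := by exact_mod_cast hN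
  have hNC : (N:ℂ) ≠ 0 := by exact_mod_cast hNR.ne'
  set a : ℂ := (ε:ℂ) - ((2/(N:ℝ) : ℝ):ℂ)*I with ha_def
  have hare : a.re = ε := by simp [ha_def]
  have haim : a.im = -(2/N) := by simp [ha_def]
  have ha : 0 < a.re := by rw [hare]; exact hε
  have ha0 : a ≠ 0 := fun h => by rw [h] at ha; simp at ha
  have hns : 0 < Complex.normSq a := Complex.normSq_pos.mpr ha0
  set δ : ℂ := (-I*(N:ℂ)*(ε:ℂ)/2) * a⁻¹ with hδ_def
  have hprod : a * δ = -I*N*ε/2 := by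
    rw [hδ_def, show a * (-I*(N:ℂ)*(ε:ℂ)/2 * a⁻¹) = (-I*(N:ℂ)*(ε:ℂ)/2) * (a⁻¹ * a) by ring,
      inv_mul_cancel₀ ha0, mul_one]
  have hδre : 0 < δ.re := by
    have h1 : (-I*(N:ℂ)*(ε:ℂ)/2).re = 0 := by simp
    have h2 : (-I*(N:ℂ)*(ε:ℂ)/2).im = -((N:ℝ)*ε/2) := by simp; ring
    have heq : δ.re = ((N:ℝ)*ε*(2/(N:ℝ))/2) / Complex.normSq a := by
      rw [hδ_def, Complex.mul_re, h1, h2, Complex.inv_im, haim]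
      ring
    rw [heq]
    apply div_pos _ hns
    have : (0:ℝ) < 2/(N:ℝ) := by positivity
    positivity
  have hδ0 : δ ≠ 0 := fun h => by rw [h] at hδre; simp at hδre
  set η : ℂ := ((4/((N:ℝ)^2*ε) : ℝ) : ℂ) + ((2/(N:ℝ) : ℝ):ℂ)*I with hη_def
  have hεC : (ε:ℂ) ≠ 0 := by exact_mod_cast hε.ne'
  have hinva : (1:ℂ)/a = δ + I*N/2 := by
    rw [div_eq_iff ha0, add_mul, mul_comm δ a, hprod, ha_def]
    push_cast
    field_simp [hNC]
    ring_nf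
    simp only [I_sq]
    ring
  have hinvδ : (1:ℂ)/δ = η := by
    have key : η * (a * δ) = a := by
      rw [hprod, hη_def, ha_def]
      push_cast
      field_simp [hNC, hεC]
      ring_nf
      simp only [I_sq]
      ring
    rw [div_eq_iff hδ0]
    calc (1:ℂ) = a⁻¹ * a := (inv_mul_cancel₀ ha0).symm
      _ = a⁻¹ * (η * (a * δ)) := by rw [key]
      _ = (a⁻¹ * a) * (η * δ) := by ring
      _ = η * δ := by rw [inv_mul_cancel₀ ha0, one_mul]
  -- first transformation
  have h1 : ∑' n : ℤ, cexp (-π * a * n^2) = 1/a^(1/2:ℂ) * ∑' n : ℤ, cexp (-π * δ * n^2) := by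
    have := Complex.tsum_exp_neg_quadratic ha 0
    simp only [mul_zero, zero_mul, add_zero] at this
    rw [this]
    congr 1
    apply tsum_congr
    intro n
    have hsplit : -↑π / a * (n:ℂ)^2 = -↑π * δ * n^2 + (-(M * n^2) : ℤ) * (2 * π * I) := by
      have : -↑π / a * (n:ℂ)^2 = -↑π * ((1:ℂ)/a) * n^2 := by ring
      rw [this, hinva, hM]
      push_cast
      ring
    rw [hsplit, Complex.exp_add, Complex.exp_int_mul_two_pi_mul_I, mul_one]
  -- second transformation
  have h2 : ∑' n : ℤ, cexp (-π * δ * n^2) = 1/δ^(1/2:ℂ) * ∑' n : ℤ, cexp (-π * η * n^2) := by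
    have := Complex.tsum_exp_neg_quadratic hδre 0
    simp only [mul_zero, zero_mul, add_zero] at this
    rw [this]
    congr 1
    apply tsum_congr
    intro n
    congr 1
    rw [show -↑π / δ * (n:ℂ)^2 = -↑π * ((1:ℂ)/δ) * n^2 by ring, hinvδ]
  rw [h1, h2]
  -- cpow algebra
  set v : ℂ := (Real.sqrt ((N:ℝ)*ε) : ℂ) * (1 - I)/2 with hv_def
  have hsq0 : (0:ℝ) < (N:ℝ)*ε := by positivity
  have hvre : 0 < v.re := by
    have h3 : (0:ℝ) < Real.sqrt ((N:ℝ)*ε) := Real.sqrt_pos.mpr hsq0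
    rw [hv_def]
    simp [Complex.div_re]
    positivity
  have hveq : a^(1/2:ℂ) * δ^(1/2:ℂ) = v := by
    apply cpow_half_mul_eq ha hδre hvre
    rw [hprod, hv_def, div_pow, mul_pow, ← Complex.ofReal_pow, Real.sq_sqrt hsq0.le]
    push_cast
    linear_combination (-((N:ℂ))*(ε:ℂ)/4) * Complex.I_sq
  have hc : (Real.sqrt ε : ℂ) * (1/a^(1/2:ℂ)) * (1/δ^(1/2:ℂ)) = (1+I)/(Real.sqrt N : ℂ) := by
    have hsN : (0:ℝ) < Real.sqrt N := Real.sqrt_pos.mpr hNR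
    have hsNC : ((Real.sqrt N : ℝ):ℂ) ≠ 0 := by exact_mod_cast hsN.ne'
    have hv0 : v ≠ 0 := fun h => by rw [h] at hvre; simp at hvre
    have ha12 : a^(1/2:ℂ) ≠ 0 := by
      intro h
      have := re_pos_mul_cpow_half ha hδre
      rw [h, zero_mul] at this; simp at this
    have hδ12 : δ^(1/2:ℂ) ≠ 0 := by
      intro h
      have := re_pos_mul_cpow_half ha hδre
      rw [h, mul_zero] at this; simp at this
    rw [show (Real.sqrt ε : ℂ) * (1/a^(1/2:ℂ)) * (1/δ^(1/2:ℂ))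
        = (Real.sqrt ε : ℂ) / (a^(1/2:ℂ) * δ^(1/2:ℂ)) by ring, hveq,
      div_eq_div_iff hv0 hsNC, hv_def]
    have hmulsqrt : Real.sqrt ((N:ℝ)*ε) = Real.sqrt N * Real.sqrt ε := Real.sqrt_mul hNR.le ε
    rw [hmulsqrt]
    push_cast
    linear_combination ((Real.sqrt N : ℂ) * (Real.sqrt ε : ℂ)/2) * Complex.I_sq
  calc (Real.sqrt ε : ℂ) * (1/a^(1/2:ℂ) * (1/δ^(1/2:ℂ) * ∑' n : ℤ, cexp (-π * η * n^2)))
      = ((Real.sqrt ε : ℂ) * (1/a^(1/2:ℂ)) * (1/δ^(1/2:ℂ))) * ∑' n : ℤ, cexp (-π * η * n^2) := by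
        ring
    _ = (1+I)/(Real.sqrt N : ℂ) * ∑' n : ℤ, cexp (-π * η * n^2) := by rw [hc]

-- exact evaluation of the fiber sums
lemma W_eq (N : ℕ) (hN : 0 < N) (r : ℕ) {ε : ℝ} (hε : 0 < ε) :
    ∑' m : ℤ, cexp (-π * (ε:ℂ) * ((r:ℂ) + N*m)^2)
      = (1/((N * Real.sqrt ε : ℝ) : ℂ)) *
        ∑' n : ℤ, cexp (2*π*I*r*n/N) * cexp (-π * ((1/(ε*N^2) : ℝ):ℂ) * n^2) := by
  have hNR : (0:ℝ) < N := by exact_mod_cast hN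
  have hNC : (N:ℂ) ≠ 0 := by exact_mod_cast hNR.ne'
  have hεC : (ε:ℂ) ≠ 0 := by exact_mod_cast hε.ne'
  have hpos : (0:ℝ) < ε * N^2 := by positivity
  have base := Complex.tsum_exp_neg_quadratic (a := ((ε*N^2 : ℝ):ℂ))
    (show 0 < (((ε*N^2 : ℝ):ℂ)).re by rw [Complex.ofReal_re]; exact hpos)
    ((-(ε*N*r) : ℝ):ℂ)
  have hL : ∀ m : ℤ, cexp (-π * (ε:ℂ) * ((r:ℂ) + N*m)^2)
      = cexp (((-(π*ε*r^2) : ℝ):ℂ)) *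
        cexp (-↑π * ((ε*N^2 : ℝ):ℂ) * (m:ℂ)^2 + 2*↑π*((-(ε*N*r) : ℝ):ℂ)*(m:ℂ)) := by
    intro m
    rw [← Complex.exp_add]
    congr 1
    push_cast
    ring
  have hR : ∀ n : ℤ, cexp (-↑π / ((ε*N^2 : ℝ):ℂ) * ((n:ℂ) + I*((-(ε*N*r) : ℝ):ℂ))^2)
      = cexp (((π*ε*r^2 : ℝ):ℂ)) *
        (cexp (2*π*I*r*n/N) * cexp (-π * ((1/(ε*N^2) : ℝ):ℂ) * (n:ℂ)^2)) := by
    intro n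
    rw [← Complex.exp_add, ← Complex.exp_add]
    congr 1
    push_cast
    field_simp
    ring_nf
    simp only [I_sq]
    ring
  have hcpow : ((ε*N^2 : ℝ):ℂ) ^ (1/2 : ℂ) = ((N * Real.sqrt ε : ℝ):ℂ) := by
    rw [show (1/2 : ℂ) = ((1/2 : ℝ):ℂ) by norm_num, ← Complex.ofReal_cpow hpos.le]
    congr 1
    rw [← Real.sqrt_eq_rpow, Real.sqrt_mul hε.le, Real.sqrt_sq hNR.le]
    ring
  calc ∑' m : ℤ, cexp (-π * (ε:ℂ) * ((r:ℂ) + N*m)^2)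
      = cexp (((-(π*ε*r^2) : ℝ):ℂ)) * ∑' m : ℤ,
          cexp (-↑π * ((ε*N^2 : ℝ):ℂ) * (m:ℂ)^2 + 2*↑π*((-(ε*N*r) : ℝ):ℂ)*(m:ℂ)) := by
        rw [← tsum_mul_left]; exact tsum_congr hL
    _ = cexp (((-(π*ε*r^2) : ℝ):ℂ)) * (1/((N * Real.sqrt ε : ℝ):ℂ) *
          ∑' n : ℤ, cexp (((π*ε*r^2 : ℝ):ℂ)) *
            (cexp (2*π*I*r*n/N) * cexp (-π * ((1/(ε*N^2) : ℝ):ℂ) * (n:ℂ)^2))) := by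
        rw [base, hcpow]
        congr 1
        congr 1
        exact tsum_congr hR
    _ = (1/((N * Real.sqrt ε : ℝ) : ℂ)) *
        ∑' n : ℤ, cexp (2*π*I*r*n/N) * cexp (-π * ((1/(ε*N^2) : ℝ):ℂ) * n^2) := by
        rw [← tsum_mul_left]
        rw [← tsum_mul_left, ← tsum_mul_left]
        apply tsum_congr
        intro n
        rw [show cexp (((-(π*ε*r^2) : ℝ):ℂ)) * (1/((N * Real.sqrt ε : ℝ):ℂ) *
            (cexp (((π*ε*r^2 : ℝ):ℂ)) * (cexp (2*π*I*r*n/N) * cexp (-π * ((1/(ε*N^2) : ℝ):ℂ) * (n:ℂ)^2))))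
          = (cexp (((-(π*ε*r^2) : ℝ):ℂ)) * cexp (((π*ε*r^2 : ℝ):ℂ))) * (1/((N * Real.sqrt ε : ℝ):ℂ) *
            (cexp (2*π*I*r*n/N) * cexp (-π * ((1/(ε*N^2) : ℝ):ℂ) * (n:ℂ)^2))) by ring,
          ← Complex.exp_add]
        norm_num

lemma W_tendsto (N : ℕ) (hN : 0 < N) (r : ℕ) :
    Tendsto (fun ε : ℝ => ((Real.sqrt ε : ℝ):ℂ) * ∑' m : ℤ, cexp (-π * (ε:ℂ) * ((r:ℂ) + N*m)^2))
      (𝓝[>] 0) (𝓝 (1/(N:ℂ))) := by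
  have hNR : (0:ℝ) < N := by exact_mod_cast hN
  have hNC : (N:ℂ) ≠ 0 := by exact_mod_cast hNR.ne'
  set c : ℤ → ℂ := fun n => cexp (2*π*I*r*n/N) with hc_def
  have hc : ∀ n, ‖c n‖ ≤ 1 := by
    intro n
    rw [hc_def]
    simp only []
    rw [show (2*π*I*r*n/N : ℂ) = ((2*π*r*n/N : ℝ):ℂ)*I by push_cast; ring]
    rw [Complex.norm_exp_ofReal_mul_I]
  have hc0 : c 0 = 1 := by rw [hc_def]; simp
  -- the inner function equals (1/N) * theta-type sum
  have heq : ∀ ε ∈ Set.Ioi (0:ℝ),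
      ((Real.sqrt ε : ℝ):ℂ) * ∑' m : ℤ, cexp (-π * (ε:ℂ) * ((r:ℂ) + N*m)^2)
        = (1/(N:ℂ)) * ∑' n : ℤ, c n * cexp (-π * ((1/(ε*N^2) : ℝ):ℂ) * n^2) := by
    intro ε hε
    rw [W_eq N hN r hε]
    have hs : ((Real.sqrt ε : ℝ):ℂ) ≠ 0 := by
      exact_mod_cast (Real.sqrt_pos.mpr hε).ne'
    rw [show ((N * Real.sqrt ε : ℝ):ℂ) = (N:ℂ) * ((Real.sqrt ε : ℝ):ℂ) by push_cast; ring]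
    simp only [hc_def]
    field_simp
    ring_nf
    apply tsum_congr
    intro n
    ring_nf
  -- tendsto of theta sum composed with 1/(ε N²)
  have hcomp : Tendsto (fun ε : ℝ => (1/(ε*N^2) : ℝ)) (𝓝[>] 0) atTop := by
    have h1 : Tendsto (fun ε : ℝ => ε*N^2) (𝓝[>] 0) (𝓝[>] 0) := by
      rw [tendsto_nhdsWithin_iff]
      constructor
      · have : Tendsto (fun ε : ℝ => ε*N^2) (𝓝 0) (𝓝 (0*N^2)) :=
          (continuous_mul_right _).tendsto 0
        rw [zero_mul] at this
        exact this.mono_left nhdsWithin_le_nhds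
      · filter_upwards [self_mem_nhdsWithin] with ε hε
        have : (0:ℝ) < ε := hε
        have : (0:ℝ) < ε * N^2 := by positivity
        exact this
    have := tendsto_inv_nhdsGT_zero.comp h1
    apply this.congr
    intro ε
    simp [one_div]
  have hth := (theta_limit c hc).comp hcomp
  rw [hc0] at hth
  have : Tendsto (fun ε : ℝ => (1/(N:ℂ)) * ∑' n : ℤ, c n * cexp (-π * ((1/(ε*N^2) : ℝ):ℂ) * n^2))
      (𝓝[>] 0) (𝓝 ((1/(N:ℂ)) * 1)) := by
    apply Tendsto.const_mul
    exact hth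
  rw [mul_one] at this
  apply this.congr' ?_
  filter_upwards [self_mem_nhdsWithin] with ε hε
  exact (heq ε hε).symm

lemma decomp (N : ℕ) (hN : 0 < N) {ε : ℝ} (hε : 0 < ε) :
    ∑' n : ℤ, cexp (-π * ((ε:ℂ) - ((2/(N:ℝ) : ℝ):ℂ)*I) * n^2)
      = ∑ r ∈ Finset.range N, cexp (2*π*I*r^2/N) * ∑' m : ℤ, cexp (-π * (ε:ℂ) * ((r:ℂ) + N*m)^2) := by
  have hNR : (0:ℝ) < N := by exact_mod_cast hN
  have hNC : (N:ℂ) ≠ 0 := by exact_mod_cast hNR.ne'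
  have : NeZero N := ⟨hN.ne'⟩
  set a : ℂ := (ε:ℂ) - ((2/(N:ℝ) : ℝ):ℂ)*I with ha_def
  have ha : 0 < a.re := by simp [ha_def]; exact hε
  set f : ℤ → ℂ := fun n => cexp (-π * a * n^2) with hf_def
  have hsum : Summable f := summable_quad ha
  set g : Fin N × ℤ ≃ ℤ := (Equiv.prodComm (Fin N) ℤ).trans (Int.divModEquiv N).symm with hg_def
  have hg_apply : ∀ p : Fin N × ℤ, g p = p.2 * N + (p.1 : ℤ) := by
    intro p
    simp [hg_def, Int.divModEquiv]
  have hsum2 : Summable (f ∘ g) := g.summable_iff.mpr hsum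
  have key : ∀ (r : Fin N) (m : ℤ), f (m * N + (r:ℤ))
      = cexp (2*π*I*(r:ℂ)^2/N) * cexp (-π * (ε:ℂ) * ((r:ℂ) + N*m)^2) := by
    intro r m
    rw [hf_def]
    simp only []
    have hexp : -π * a * ((m * N + (r:ℤ) : ℤ):ℂ)^2
        = 2*π*I*(r:ℂ)^2/N + (-π * (ε:ℂ) * ((r:ℂ) + N*m)^2) + ((N*m^2 + 2*m*r : ℤ):ℂ)*(2*π*I) := by
      rw [ha_def]
      push_cast
      field_simp
      ring
    rw [hexp, Complex.exp_add, Complex.exp_add]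
    rw [show (((N*m^2 + 2*m*r : ℤ)):ℂ)*(2*π*I) = ((N*m^2 + 2*m*r : ℤ):ℂ)*(2*π*I) from rfl,
      Complex.exp_int_mul_two_pi_mul_I, mul_one]
  calc ∑' n : ℤ, f n = ∑' p : Fin N × ℤ, f (g p) := (g.tsum_eq f).symm
    _ = ∑' (r : Fin N), ∑' (m : ℤ), f (g (r, m)) := Summable.tsum_prod' hsum2 (fun r => hsum2.prod_factor r)
    _ = ∑ r : Fin N, ∑' (m : ℤ), f (g (r, m)) := tsum_fintype _
    _ = ∑ r : Fin N, cexp (2*π*I*(r:ℂ)^2/N) * ∑' m : ℤ, cexp (-π * (ε:ℂ) * ((r:ℂ) + N*m)^2) := by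
        apply Finset.sum_congr rfl
        intro r _
        rw [← tsum_mul_left]
        apply tsum_congr
        intro m
        rw [hg_apply (r, m)]
        exact key r m
    _ = ∑ r ∈ Finset.range N, cexp (2*π*I*r^2/N) * ∑' m : ℤ, cexp (-π * (ε:ℂ) * ((r:ℂ) + N*m)^2) := by
        rw [← Fin.sum_univ_eq_sum_range]

lemma gauss_T (N M : ℕ) (hM : N = 4 * M) (hMpos : 0 < M) :
    ∑ r ∈ Finset.range N, cexp (2*π*I*r^2/N) = (1+I) * (Real.sqrt N : ℂ) := by
  have hN : 0 < N := by omega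
  have hNR : (0:ℝ) < N := by exact_mod_cast hN
  have hNC : (N:ℂ) ≠ 0 := by exact_mod_cast hNR.ne'
  have hsN : (0:ℝ) < Real.sqrt N := Real.sqrt_pos.mpr hNR
  have hsNC : ((Real.sqrt N : ℝ):ℂ) ≠ 0 := by exact_mod_cast hsN.ne'
  set F : ℝ → ℂ := fun ε =>
    ((Real.sqrt ε : ℝ):ℂ) * ∑' n : ℤ, cexp (-π * ((ε:ℂ) - ((2/(N:ℝ) : ℝ):ℂ)*I) * n^2) with hF_def
  -- limit 1 : T / N
  have hlim1 : Tendsto F (𝓝[>] 0)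
      (𝓝 ((∑ r ∈ Finset.range N, cexp (2*π*I*r^2/N)) * (1/(N:ℂ)))) := by
    have h1 : Tendsto (fun ε : ℝ => ∑ r ∈ Finset.range N,
        cexp (2*π*I*r^2/N) * (((Real.sqrt ε : ℝ):ℂ) * ∑' m : ℤ, cexp (-π * (ε:ℂ) * ((r:ℂ) + N*m)^2)))
        (𝓝[>] 0) (𝓝 (∑ r ∈ Finset.range N, cexp (2*π*I*r^2/N) * (1/(N:ℂ)))) := by
      apply tendsto_finset_sum
      intro r _
      exact (W_tendsto N hN r).const_mul _
    rw [← Finset.sum_mul] at h1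
    apply h1.congr' ?_
    filter_upwards [self_mem_nhdsWithin] with ε hε
    have hε' : (0:ℝ) < ε := hε
    rw [hF_def]
    simp only []
    rw [decomp N hN hε', Finset.mul_sum]
    apply Finset.sum_congr rfl
    intro r _
    ring
  -- limit 2 : (1+I)/√N
  have hlim2 : Tendsto F (𝓝[>] 0) (𝓝 ((1+I)/((Real.sqrt N : ℝ):ℂ))) := by
    set c : ℤ → ℂ := fun n => cexp (-π * ((2/(N:ℝ) : ℝ):ℂ)*I * n^2) with hc_def
    have hc : ∀ n, ‖c n‖ ≤ 1 := by
      intro n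
      rw [hc_def]
      simp only []
      rw [show (-π * ((2/(N:ℝ) : ℝ):ℂ)*I * (n:ℂ)^2 : ℂ) = ((-π * (2/(N:ℝ)) * (n:ℝ)^2 : ℝ):ℂ)*I by
        push_cast; ring]
      rw [Complex.norm_exp_ofReal_mul_I]
    have hc0 : c 0 = 1 := by rw [hc_def]; simp
    have hcomp : Tendsto (fun ε : ℝ => (4/((N:ℝ)^2*ε) : ℝ)) (𝓝[>] 0) atTop := by
      have h1 : Tendsto (fun ε : ℝ => (N:ℝ)^2*ε/4) (𝓝[>] 0) (𝓝[>] 0) := by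
        rw [tendsto_nhdsWithin_iff]
        constructor
        · have : Tendsto (fun ε : ℝ => (N:ℝ)^2*ε/4) (𝓝 0) (𝓝 ((N:ℝ)^2*0/4)) := by
            apply Tendsto.div_const
            exact (continuous_const.mul continuous_id).tendsto 0
          simpa using this.mono_left nhdsWithin_le_nhds
        · filter_upwards [self_mem_nhdsWithin] with ε hε
          have : (0:ℝ) < ε := hε
          show (0:ℝ) < (N:ℝ)^2*ε/4
          positivity
      have := tendsto_inv_nhdsGT_zero.comp h1
      apply this.congr
      intro ε
      simp only [Function.comp_apply, inv_div]
    have hth := (theta_limit c hc).comp hcomp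
    rw [hc0] at hth
    have hmain : Tendsto (fun ε : ℝ => (1+I)/((Real.sqrt N : ℝ):ℂ) *
        ∑' n : ℤ, c n * cexp (-π * ((4/((N:ℝ)^2*ε) : ℝ):ℂ) * n^2)) (𝓝[>] 0)
        (𝓝 ((1+I)/((Real.sqrt N : ℝ):ℂ) * 1)) := by
      apply Tendsto.const_mul
      exact hth
    rw [mul_one] at hmain
    apply hmain.congr' ?_
    filter_upwards [self_mem_nhdsWithin] with ε hε
    have hε' : (0:ℝ) < ε := hε
    rw [hF_def]
    simp only []
    rw [key_identity N M hM hMpos ε hε']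
    congr 1
    apply tsum_congr
    intro n
    rw [hc_def]
    simp only []
    rw [← Complex.exp_add]
    congr 1
    push_cast
    ring
  have huniq := tendsto_nhds_unique hlim1 hlim2
  field_simp at huniq
  have hNid : ((N:ℕ):ℂ) = ((Real.sqrt N : ℝ):ℂ) * ((Real.sqrt N : ℝ):ℂ) := by
    rw [← Complex.ofReal_mul, Real.mul_self_sqrt hNR.le]
    norm_num
  have hfin : (∑ r ∈ Finset.range N, cexp (2*π*I*r^2/N)) * ((Real.sqrt N : ℝ):ℂ)
      = ((1+I) * ((Real.sqrt N : ℝ):ℂ)) * ((Real.sqrt N : ℝ):ℂ) := by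
    rw [huniq, hNid]
    ring
  exact mul_right_cancel₀ hsNC hfin

lemma sum_even_odd (n : ℕ) (f : ℕ → ℂ) :
    ∑ i ∈ Finset.range (2*n), f i = ∑ j ∈ Finset.range n, f (2*j) + ∑ j ∈ Finset.range n, f (2*j+1) := by
  induction n with
  | zero => simp
  | succ n ih =>
    rw [show 2*(n+1) = 2*n + 1 + 1 by ring, Finset.sum_range_succ, Finset.sum_range_succ,
      Finset.sum_range_succ, Finset.sum_range_succ, ih]
    ring

theorem gauss_sum_n_sq_sub_n_odd (k : ℕ) (hk : 0 < k) (hodd : Odd k) :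
    ∑ n ∈ Finset.range k,
        Complex.exp (Complex.I * (π : ℂ) * ((n : ℂ) ^ 2 - (n : ℂ)) / (k : ℂ)) =
      ((1 + Complex.I) / 2) * Complex.exp (-Complex.I * (π : ℂ) / (4 * (k : ℂ))) *
        (Real.sqrt (2 * (k : ℝ)) : ℂ) := by
  obtain ⟨t, ht⟩ := hodd
  have hkR : (0:ℝ) < k := by exact_mod_cast hk
  have hkC : (k:ℂ) ≠ 0 := by exact_mod_cast hkR.ne'
  set g : ℕ → ℂ := fun m => cexp (2*π*I*(m:ℂ)^2/((8*k : ℕ):ℂ)) with hg_def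
  set s : ℕ → ℂ := fun n => cexp (I * (π:ℂ) * ((n:ℂ)^2 - n) / k) with hs_def
  set S : ℂ := ∑ n ∈ Finset.range k, s n with hS_def
  have hT := gauss_T (8*k) (2*k) (by ring) (by omega)
  -- step 1 : halve
  have h1 : ∑ r ∈ Finset.range (8*k), g r = 2 * ∑ m ∈ Finset.range (4*k), g m := by
    rw [show 8*k = 4*k + 4*k by ring, Finset.sum_range_add]
    have : ∀ m ∈ Finset.range (4*k), g (4*k + m) = g m := by
      intro m _
      rw [hg_def]
      simp only []
      rw [show 2*π*I*((4*k + m : ℕ):ℂ)^2/((8*k : ℕ):ℂ)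
          = 2*π*I*(m:ℂ)^2/((8*k : ℕ):ℂ) + ((2*k + m : ℕ):ℤ)*(2*π*I) by
        push_cast; field_simp; ring]
      rw [Complex.exp_add, Complex.exp_int_mul_two_pi_mul_I, mul_one]
    rw [Finset.sum_congr rfl this]
    ring
  -- step 2 : even/odd split
  have h2 : ∑ m ∈ Finset.range (4*k), g m
      = ∑ j ∈ Finset.range (2*k), g (2*j) + ∑ j ∈ Finset.range (2*k), g (2*j+1) := by
    rw [show 4*k = 2*(2*k) by ring]
    exact sum_even_odd (2*k) g
  -- step 3 : evens vanish
  have h3 : ∑ j ∈ Finset.range (2*k), g (2*j) = 0 := by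
    rw [show 2*k = k + k by ring, Finset.sum_range_add]
    have : ∀ j ∈ Finset.range k, g (2*(k + j)) = - g (2*j) := by
      intro j _
      rw [hg_def]
      simp only []
      rw [show 2*π*I*((2*(k+j) : ℕ):ℂ)^2/((8*k : ℕ):ℂ)
          = 2*π*I*((2*j : ℕ):ℂ)^2/((8*k : ℕ):ℂ) + ((k + 2*j : ℕ):ℂ)*(π*I) by
        push_cast; field_simp; ring]
      rw [Complex.exp_add]
      rw [show ((k + 2*j : ℕ):ℂ)*(π*I) = ((t + j : ℕ):ℤ)*(2*π*I) + π*I by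
        rw [ht]; push_cast; ring]
      rw [Complex.exp_add, Complex.exp_int_mul_two_pi_mul_I, Complex.exp_pi_mul_I]
      ring
    rw [Finset.sum_congr rfl this]
    simp
  -- step 4 : odds
  set u : ℕ → ℂ := fun j => cexp (I * (π:ℂ) * ((j:ℂ)^2 + j) / k) with hu_def
  have h4 : ∀ j : ℕ, g (2*j+1) = u j * cexp (I*(π:ℂ)/(4*(k:ℂ))) := by
    intro j
    rw [hg_def, hu_def]
    simp only []
    rw [← Complex.exp_add]
    congr 1
    push_cast
    field_simp
    ring
  -- step 5 : fold odds
  have h5 : ∑ j ∈ Finset.range (2*k), u j = 2 * ∑ j ∈ Finset.range k, u j := by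
    rw [show 2*k = k + k by ring, Finset.sum_range_add]
    have : ∀ j ∈ Finset.range k, u (k + j) = u j := by
      intro j _
      simp only [hu_def]
      rw [show I * (π:ℂ) * (((k + j : ℕ):ℂ)^2 + ((k + j : ℕ):ℂ)) / k
          = I * (π:ℂ) * ((j:ℂ)^2 + j) / k + ((k + 2*j + 1 : ℕ):ℂ)*(π*I) by
        push_cast; field_simp; ring]
      rw [show ((k + 2*j + 1 : ℕ):ℂ)*(π*I) = ((t + j + 1 : ℕ):ℤ)*(2*π*I) by
        have hsplit : k + 2*j + 1 = 2*(t+j+1) := by omega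
        rw [hsplit]; push_cast; ring]
      rw [Complex.exp_add, Complex.exp_int_mul_two_pi_mul_I, mul_one]
    rw [Finset.sum_congr rfl this]
    ring
  -- step 6 : ∑_{j<k} u j = S
  have h6 : ∑ j ∈ Finset.range k, u j = S := by
    have hus : ∀ j : ℕ, u j = s (j+1) := by
      intro j
      simp only [hu_def, hs_def]
      congr 1
      push_cast
      ring
    have hs0 : s 0 = 1 := by rw [hs_def]; simp
    have hsk : s k = 1 := by
      simp only [hs_def]
      rw [show I * (π:ℂ) * ((k:ℂ)^2 - k) / k = ((k - 1 : ℕ):ℂ)*(π*I) by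
        rw [Nat.cast_sub hk]; push_cast; field_simp]
      rw [show ((k - 1 : ℕ):ℂ)*(π*I) = ((t:ℕ):ℤ)*(2*π*I) by
        have hsplit : k - 1 = 2*t := by omega
        rw [hsplit]; push_cast; ring]
      rw [Complex.exp_int_mul_two_pi_mul_I]
    have e1 : ∑ n ∈ Finset.range (k+1), s n = S + s k := by
      rw [Finset.sum_range_succ, hS_def]
    have e2 : ∑ n ∈ Finset.range (k+1), s n = (∑ j ∈ Finset.range k, s (j+1)) + s 0 :=
      Finset.sum_range_succ' s k
    rw [Finset.sum_congr rfl (fun j _ => hus j), ]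
    have := e1.symm.trans e2
    rw [hs0, hsk] at this
    linear_combination -this
  -- assemble
  have hTg : ∑ r ∈ Finset.range (8*k), g r = (1+I)*((Real.sqrt ((8*k:ℕ):ℝ)):ℂ) := by
    simpa only [hg_def] using hT
  have hodd_sum : ∑ j ∈ Finset.range (2*k), g (2*j+1)
      = (∑ j ∈ Finset.range (2*k), u j) * cexp (I*(π:ℂ)/(4*(k:ℂ))) := by
    rw [Finset.sum_mul]
    exact Finset.sum_congr rfl (fun j _ => h4 j)
  have hchain : ∑ r ∈ Finset.range (8*k), g r = 4 * S * cexp (I*(π:ℂ)/(4*(k:ℂ))) := by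
    rw [h1, h2, h3, hodd_sum, h5, h6]
    ring
  have hTS : 4 * S * cexp (I*(π:ℂ)/(4*(k:ℂ))) = (1+I)*((Real.sqrt ((8*k:ℕ):ℝ)):ℂ) := by
    rw [← hchain]
    exact hTg
  have hcc : cexp (I*(π:ℂ)/(4*(k:ℂ))) * cexp (-I*(π:ℂ)/(4*(k:ℂ))) = 1 := by
    rw [← Complex.exp_add]
    rw [show I*(π:ℂ)/(4*(k:ℂ)) + -I*(π:ℂ)/(4*(k:ℂ)) = 0 by ring]
    exact Complex.exp_zero
  have hsqrt : ((Real.sqrt ((8*k:ℕ):ℝ)):ℂ) = 2*((Real.sqrt (2*(k:ℝ))):ℂ) := by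
    have h8 : ((8*k:ℕ):ℝ) = 4*(2*(k:ℝ)) := by push_cast; ring
    rw [h8, Real.sqrt_mul (by norm_num : (0:ℝ) ≤ 4),
      show Real.sqrt 4 = 2 by
        rw [show (4:ℝ) = 2^2 by norm_num, Real.sqrt_sq (by norm_num : (0:ℝ) ≤ 2)]]
    push_cast
    ring
  have h4S : S * 4 = (1+I) * (2*((Real.sqrt (2*(k:ℝ))):ℂ)) * cexp (-I*(π:ℂ)/(4*(k:ℂ))) := by
    have e : (4*S*cexp (I*(π:ℂ)/(4*(k:ℂ))))*cexp (-I*(π:ℂ)/(4*(k:ℂ))) = S*4 := by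
      rw [mul_assoc, hcc]
      ring
    rw [← e, hTS, hsqrt]
  show S = ((1 + I) / 2) * cexp (-I * (π:ℂ) / (4 * (k:ℂ))) * ((Real.sqrt (2*(k:ℝ))):ℂ)
  linear_combination (1/4 : ℂ) * h4S
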